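/- Let d ≥ 1, j ∈ {1,…,d}, ℓ ≥ 1 an integer, β > 0, L > 0 and s ∈ [1,∞]. Let f : ℝ^d → ℝ be measurable with ‖Δ^ℓ_{u,j} f‖_s ≤ L·|u|^β for every u ∈ ℝ, and let 𝒦 : ℝ → ℝ be measurable with I := ∫_ℝ |𝒦(z)|·|z|^β dz < ∞. Then for every integer 𝐤, the sum over all integers k ≤ 𝐤 of ‖x ↦ ∫_ℝ 𝒦(z) Δ^ℓ_{z e^k, j} f(x) dz‖_s is at most L·I·e^{𝐤β}/(1 − e^{−β}). -/

import Mathlib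

open MeasureTheory
open scoped ENNReal

/-- First-order difference operator with step `u` in the direction of the
`j`-th variable: `Δ_{u,j} f (x) = f(x + u·e_j) − f(x)`. -/
noncomputable def diffOp {d : ℕ} (j : Fin d) (u : ℝ)
    (f : (Fin d → ℝ) → ℝ) : (Fin d → ℝ) → ℝ :=
  fun x => f (x + u • (Pi.single j 1 : Fin d → ℝ)) - f x

/-- `k`-th order difference operator `Δ^k_{u,j}`, defined by iteration. -/
noncomputable def diffIter {d : ℕ} (j : Fin d) (u : ℝ) (k : ℕ)
    (f : (Fin d → ℝ) → ℝ) : (Fin d → ℝ) → ℝ :=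
  (diffOp j u)^[k] f

lemma aux_measurable_diffIter {d : ℕ} (j : Fin d) (ℓ : ℕ) {f : (Fin d → ℝ) → ℝ}
    (hf : Measurable f) :
    Measurable fun p : ℝ × (Fin d → ℝ) => diffIter j p.1 ℓ f p.2 := by
  induction ℓ with
  | zero => simpa [diffIter, Function.comp_def] using hf.comp measurable_snd
  | succ n ih =>
    have heq : ∀ p : ℝ × (Fin d → ℝ), diffIter j p.1 (n + 1) f p.2 =
        diffIter j p.1 n f (p.2 + p.1 • (Pi.single j 1 : Fin d → ℝ)) -
          diffIter j p.1 n f p.2 := by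
      intro p
      simp only [diffIter, Function.iterate_succ_apply']
      rfl
    simp only [heq]
    have hm : Measurable fun p : ℝ × (Fin d → ℝ) =>
        (p.1, p.2 + p.1 • (Pi.single j 1 : Fin d → ℝ)) := by
      refine measurable_fst.prodMk (measurable_snd.add ?_)
      exact (continuous_fst.smul continuous_const).measurable
    exact (ih.comp hm).sub ih

/-- Minkowski's integral inequality for `ℝ≥0∞`-valued functions. -/
lemma aux_minkowski {α β : Type*} [MeasurableSpace α] [MeasurableSpace β]
    (μ : Measure α) [SigmaFinite μ] (ν : Measure β) [SigmaFinite ν]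
    (F : β → α → ℝ≥0∞) (hF : Measurable (Function.uncurry F)) {p : ℝ} (hp : 1 ≤ p) :
    (∫⁻ x, (∫⁻ z, F z x ∂ν) ^ p ∂μ) ^ (1/p) ≤ ∫⁻ z, (∫⁻ x, F z x ^ p ∂μ) ^ (1/p) ∂ν := by
  have hFz : ∀ z, Measurable (F z) := fun z => hF.of_uncurry_left
  have hFswap : Measurable (Function.uncurry fun x z => F z x) := hF.comp measurable_swap
  have hφ : Measurable fun x => ∫⁻ z, F z x ∂ν := hFswap.lintegral_prod_right'
  rcases eq_or_lt_of_le hp with hp1 | hp1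
  · -- p = 1
    rw [← hp1]
    simp only [ENNReal.rpow_one, one_div, inv_one]
    rw [lintegral_lintegral_swap hFswap.aemeasurable]
  · -- p > 1
    set q := Real.conjExponent p with hq
    have hpq : p.HolderConjugate q := Real.HolderConjugate.conjExponent hp1
    have hp0 : 0 < p := lt_trans one_pos hp1
    set φ : α → ℝ≥0∞ := fun x => ∫⁻ z, F z x ∂ν with hφdef
    set φn : ℕ → α → ℝ≥0∞ := fun n =>
      (spanningSets μ n).indicator (fun x => min (φ x) n) with hφn
    have hφnmeas : ∀ n, Measurable (φn n) := fun n =>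
      (hφ.min measurable_const).indicator (measurableSet_spanningSets μ n)
    have hφnle : ∀ n x, φn n x ≤ φ x := by
      intro n x
      classical
      simp only [hφn, Set.indicator]
      split_ifs
      · exact min_le_left _ _
      · exact zero_le
    have hφnlen : ∀ n x, φn n x ≤ (n : ℝ≥0∞) := by
      intro n x
      classical
      simp only [hφn, Set.indicator]
      split_ifs
      · exact min_le_right _ _
      · exact zero_le
    have hφnmono : Monotone φn := by
      intro m n hmn x
      classical
      simp only [hφn, Set.indicator]
      split_ifs with h1 h2
      · exact min_le_min le_rfl (by exact_mod_cast Nat.cast_le.2 hmn)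
      · exact absurd (monotone_spanningSets μ hmn h1) h2
      · exact zero_le
      · exact le_rfl
    have hφnsup : ∀ x, ⨆ n, φn n x = φ x := by
      intro x
      apply le_antisymm (iSup_le fun n => hφnle n x)
      obtain ⟨N, hN⟩ : ∃ N, x ∈ spanningSets μ N := by
        have h1 := iUnion_spanningSets μ
        have hx : x ∈ ⋃ i, spanningSets μ i := h1 ▸ Set.mem_univ x
        exact Set.mem_iUnion.1 hx
      have key : φ x = ⨆ m : ℕ, min (φ x) m := by
        rw [← inf_iSup_eq, ENNReal.iSup_natCast]
        simp
      rw [key]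
      apply iSup_le
      intro m
      refine le_trans ?_ (le_iSup _ (max m N))
      have hxmem : x ∈ spanningSets μ (max m N) := monotone_spanningSets μ (le_max_right m N) hN
      simp only [hφn, Set.indicator_of_mem hxmem]
      exact min_le_min le_rfl (by exact_mod_cast Nat.cast_le.2 (le_max_left m N))
    set B : ℝ≥0∞ := ∫⁻ z, (∫⁻ x, F z x ^ p ∂μ) ^ (1/p) ∂ν with hB
    have hkey : ∀ n, ∫⁻ x, φn n x ^ p ∂μ ≤ B ^ p := by
      intro n
      set A : ℝ≥0∞ := ∫⁻ x, φn n x ^ p ∂μ with hA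
      have hAfin : A < ∞ := by
        calc A ≤ ∫⁻ x, (spanningSets μ n).indicator (fun _ => (n : ℝ≥0∞) ^ p) x ∂μ := by
              apply lintegral_mono
              intro x
              classical
              simp only [hφn, Set.indicator]
              split_ifs
              · exact ENNReal.rpow_le_rpow (min_le_right _ _) hp0.le
              · simp [ENNReal.zero_rpow_of_pos hp0]
          _ = (n : ℝ≥0∞) ^ p * μ (spanningSets μ n) := by
              rw [lintegral_indicator (measurableSet_spanningSets μ n)]
              exact setLIntegral_const _ _
          _ < ∞ := ENNReal.mul_lt_top
              (ENNReal.rpow_lt_top_of_nonneg hp0.le (ENNReal.natCast_ne_top n))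
              (measure_spanningSets_lt_top μ n)
      have hφntop : ∀ x, φn n x ^ (p - 1) ≠ ∞ := fun x =>
        ENNReal.rpow_ne_top_of_nonneg (by linarith)
          (lt_of_le_of_lt (hφnlen n x) (ENNReal.natCast_lt_top n)).ne
      have step1 : A ≤ B * A ^ (1/q) := by
        have e1 : ∀ x, φn n x ^ p = φn n x ^ (p - 1) * φn n x := by
          intro x
          conv_lhs => rw [show p = p - 1 + 1 by ring]
          rw [ENNReal.rpow_add_of_nonneg _ _ (by linarith) zero_le_one, ENNReal.rpow_one]
        calc A = ∫⁻ x, φn n x ^ (p - 1) * φn n x ∂μ := lintegral_congr e1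
          _ ≤ ∫⁻ x, φn n x ^ (p - 1) * φ x ∂μ :=
              lintegral_mono fun x => mul_le_mul_right (hφnle n x) _
          _ = ∫⁻ x, ∫⁻ z, φn n x ^ (p - 1) * F z x ∂ν ∂μ :=
              lintegral_congr fun x => (lintegral_const_mul' _ _ (hφntop x)).symm
          _ = ∫⁻ z, ∫⁻ x, φn n x ^ (p - 1) * F z x ∂μ ∂ν := by
              apply lintegral_lintegral_swap
              apply Measurable.aemeasurable
              exact (((hφnmeas n).comp measurable_fst).pow_const _).mul
                (hF.comp measurable_swap)
          _ ≤ ∫⁻ z, (∫⁻ x, F z x ^ p ∂μ) ^ (1/p) * (∫⁻ x, (φn n x ^ (p - 1)) ^ q ∂μ) ^ (1/q) ∂ν := by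
              apply lintegral_mono
              intro z
              have := ENNReal.lintegral_mul_le_Lp_mul_Lq μ hpq (hFz z).aemeasurable
                (((hφnmeas n).pow_const (p - 1)).aemeasurable)
              simp only [Pi.mul_apply] at this
              calc ∫⁻ x, φn n x ^ (p - 1) * F z x ∂μ
                  = ∫⁻ x, F z x * φn n x ^ (p - 1) ∂μ :=
                    lintegral_congr fun x => mul_comm _ _
                _ ≤ _ := this
          _ = ∫⁻ z, (∫⁻ x, F z x ^ p ∂μ) ^ (1/p) * A ^ (1/q) ∂ν := by
              apply lintegral_congr
              intro z
              congr 2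
              apply lintegral_congr
              intro x
              rw [← ENNReal.rpow_mul, hpq.sub_one_mul_conj]
          _ = B * A ^ (1/q) :=
              lintegral_mul_const' _ _
                (ENNReal.rpow_lt_top_of_nonneg hpq.symm.one_div_nonneg hAfin.ne).ne
      -- conclude A ≤ B ^ p
      rcases eq_or_ne A 0 with hA0 | hA0
      · rw [hA0]; exact zero_le
      · have hsplit : A = A ^ (1/p) * A ^ (1/q) := by
          rw [← ENNReal.rpow_add_of_nonneg _ _ hpq.one_div_nonneg hpq.symm.one_div_nonneg]
          rw [one_div, one_div, hpq.inv_add_inv_eq_one, ENNReal.rpow_one]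
        have hAq0 : A ^ (1/q) ≠ 0 := by
          simp only [ne_eq, ENNReal.rpow_eq_zero_iff, not_or, not_and]
          exact ⟨fun h => absurd h hA0, fun h => absurd h hAfin.ne⟩
        have hAqtop : A ^ (1/q) ≠ ∞ :=
          (ENNReal.rpow_lt_top_of_nonneg hpq.symm.one_div_nonneg hAfin.ne).ne
        have h2 : A ^ (1/p) * A ^ (1/q) ≤ B * A ^ (1/q) := hsplit ▸ step1
        have h3 : A ^ (1/p) ≤ B := (ENNReal.mul_le_mul_iff_left hAq0 hAqtop).1 h2
        calc A = (A ^ (1/p)) ^ p := by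
              rw [← ENNReal.rpow_mul, one_div, inv_mul_cancel₀ hp0.ne', ENNReal.rpow_one]
          _ ≤ B ^ p := ENNReal.rpow_le_rpow h3 hp0.le
    -- monotone convergence
    have hMC : ∫⁻ x, φ x ^ p ∂μ = ⨆ n, ∫⁻ x, φn n x ^ p ∂μ := by
      rw [← lintegral_iSup (fun n => (hφnmeas n).pow_const _)
        (fun m n hmn x => ENNReal.rpow_le_rpow (hφnmono hmn x) hp0.le)]
      apply lintegral_congr
      intro x
      rw [← hφnsup x]
      exact ((ENNReal.orderIsoRpow p hp0).map_iSup (fun n => φn n x)).symm ▸ rfl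
    have : ∫⁻ x, φ x ^ p ∂μ ≤ B ^ p := by
      rw [hMC]; exact iSup_le hkey
    calc (∫⁻ x, φ x ^ p ∂μ) ^ (1/p) ≤ (B ^ p) ^ (1/p) :=
          ENNReal.rpow_le_rpow this (by positivity)
      _ = B := by
          rw [← ENNReal.rpow_mul, mul_one_div, div_self hp0.ne', ENNReal.rpow_one]


lemma aux_key {d : ℕ} (j : Fin d) (ℓ : ℕ) {βe L : ℝ} (hβe : 0 < βe) (hL : 0 < L)
    {s : ℝ≥0∞} (hs : 1 ≤ s) {f : (Fin d → ℝ) → ℝ} (hf : Measurable f)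
    (hfs : ∀ u : ℝ, eLpNorm (diffIter j u ℓ f) s volume ≤ ENNReal.ofReal (L * |u| ^ βe))
    {K : ℝ → ℝ} (hK : Measurable K) {I : ℝ} (hI : I = ∫ z, |K z| * |z| ^ βe)
    (hint : Integrable (fun z => |K z| * |z| ^ βe))
    {u0 : ℝ} (hu0 : 0 < u0) :
    eLpNorm (fun x => ∫ z, K z * diffIter j (z * u0) ℓ f x) s volume
      ≤ ENNReal.ofReal (L * I * u0 ^ βe) := by
  set g : ℝ → (Fin d → ℝ) → ℝ := fun z x => K z * diffIter j (z * u0) ℓ f x with hg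
  have hgm : Measurable (Function.uncurry g) := by
    apply Measurable.mul
    · exact hK.comp measurable_fst
    · exact (aux_measurable_diffIter j ℓ hf).comp
        ((measurable_fst.mul_const u0).prodMk measurable_snd)
  set F : ℝ → (Fin d → ℝ) → ℝ≥0∞ := fun z x => (‖g z x‖₊ : ℝ≥0∞) with hF
  have hFm : Measurable (Function.uncurry F) := hgm.nnnorm.coe_nnreal_ennreal
  set M : ℝ → ℝ≥0∞ := fun z => ENNReal.ofReal (|K z| * (L * |z * u0| ^ βe)) with hM
  have hgz : ∀ z, eLpNorm (g z) s volume ≤ M z := by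
    intro z
    have hsm : g z = (K z) • (diffIter j (z * u0) ℓ f) := by
      funext x; simp [hg, smul_eq_mul]
    have hMz : M z = ENNReal.ofReal |K z| * ENNReal.ofReal (L * |z * u0| ^ βe) := by
      simp only [hM]
      rw [ENNReal.ofReal_mul (abs_nonneg (K z))]
    rw [hsm, eLpNorm_const_smul, hMz]
    exact mul_le_mul' (le_of_eq (Real.enorm_eq_ofReal_abs _)) (hfs _)
  have hMint : ∫⁻ z, M z = ENNReal.ofReal (L * I * u0 ^ βe) := by
    have habs : ∀ z : ℝ, |K z| * (L * |z * u0| ^ βe) =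
        (L * u0 ^ βe) * (|K z| * |z| ^ βe) := by
      intro z
      rw [abs_mul, Real.mul_rpow (abs_nonneg z) (abs_nonneg u0), abs_of_pos hu0]
      ring
    have hLu : 0 ≤ L * u0 ^ βe := by positivity
    simp only [hM, habs, ENNReal.ofReal_mul hLu]
    rw [lintegral_const_mul' _ _ ENNReal.ofReal_ne_top,
      ← ofReal_integral_eq_lintegral_ofReal hint
        (Filter.Eventually.of_forall fun z => by positivity),
      ← hI, ← ENNReal.ofReal_mul hLu]
    congr 1
    ring
  rcases eq_or_ne s ∞ with hstop | hstop
  · -- s = ∞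
    subst hstop
    have hzae : ∀ z, ∀ᵐ x : (Fin d → ℝ), F z x ≤ M z := by
      intro z
      have h3 := hfs (z * u0)
      rw [eLpNorm_exponent_top] at h3
      filter_upwards [ae_le_eLpNormEssSup (f := diffIter j (z * u0) ℓ f) (μ := volume)]
        with x hx
      have : F z x = (‖K z‖₊ : ℝ≥0∞) * (‖diffIter j (z * u0) ℓ f x‖₊ : ℝ≥0∞) := by
        simp [hF, hg, nnnorm_mul, ENNReal.coe_mul]
      have hMz : M z = ENNReal.ofReal |K z| * ENNReal.ofReal (L * |z * u0| ^ βe) := by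
        simp only [hM]
        rw [ENNReal.ofReal_mul (abs_nonneg (K z))]
      rw [this, hMz]
      exact mul_le_mul' (le_of_eq (Real.enorm_eq_ofReal_abs _)) (le_trans hx h3)
    set A : Set ((Fin d → ℝ) × ℝ) := {q | M q.2 < F q.2 q.1} with hA
    have hAm : MeasurableSet A := by
      apply measurableSet_lt
      · apply ENNReal.measurable_ofReal.comp
        apply Measurable.mul
        · exact (hK.comp measurable_snd).abs
        · exact measurable_const.mul
            (((measurable_snd.mul_const u0).abs).pow measurable_const)
      · exact hFm.comp measurable_swap
    have hnull : (volume.prod volume) A = 0 := by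
      rw [Measure.prod_apply_symm hAm]
      have hz0 : ∀ z : ℝ, volume ((fun x => (x, z)) ⁻¹' A) = 0 := by
        intro z
        have h1 := hzae z
        rw [ae_iff] at h1
        convert h1 using 2
        ext x
        simp [hA, not_le]
      simp only [hz0, lintegral_zero]
    have hae := Measure.measure_ae_null_of_prod_null hnull
    rw [eLpNorm_exponent_top]
    refine essSup_le_of_ae_le _ ?_
    filter_upwards [hae] with x hx
    have hxz : ∀ᵐ z : ℝ, F z x ≤ M z := by
      rw [ae_iff]
      simp only [Pi.zero_apply] at hx
      convert hx using 2
      ext z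
      simp [hA, not_le, Set.preimage]
    calc (‖∫ z, g z x‖₊ : ℝ≥0∞) ≤ ∫⁻ z, F z x := enorm_integral_le_lintegral_enorm _
      _ ≤ ∫⁻ z, M z := lintegral_mono_ae hxz
      _ = ENNReal.ofReal (L * I * u0 ^ βe) := hMint
  · -- s finite
    have hs0 : s ≠ 0 := (zero_lt_one.trans_le hs).ne'
    have hp1 : 1 ≤ s.toReal := by
      rw [← ENNReal.toReal_one]
      exact ENNReal.toReal_mono hstop hs
    have hp0 : (0:ℝ) < s.toReal := lt_of_lt_of_le one_pos hp1
    rw [eLpNorm_eq_lintegral_rpow_enorm_toReal hs0 hstop]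
    calc (∫⁻ x, (‖∫ z, g z x‖₊ : ℝ≥0∞) ^ s.toReal) ^ (1 / s.toReal)
        ≤ (∫⁻ x, (∫⁻ z, F z x) ^ s.toReal) ^ (1 / s.toReal) := by
          apply ENNReal.rpow_le_rpow _ (by positivity)
          apply lintegral_mono
          intro x
          exact ENNReal.rpow_le_rpow (enorm_integral_le_lintegral_enorm _) hp0.le
      _ ≤ ∫⁻ z, (∫⁻ x, F z x ^ s.toReal) ^ (1 / s.toReal) :=
          aux_minkowski volume volume F hFm hp1
      _ = ∫⁻ z, eLpNorm (g z) s volume := by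
          apply lintegral_congr
          intro z
          rw [eLpNorm_eq_lintegral_rpow_enorm_toReal hs0 hstop]
          rfl
      _ ≤ ∫⁻ z, M z := lintegral_mono hgz
      _ = ENNReal.ofReal (L * I * u0 ^ βe) := hMint

def auxEquiv (bk : ℤ) : ℕ ≃ {k : ℤ // k ≤ bk} where
  toFun n := ⟨bk - n, by omega⟩
  invFun k := (bk - k.1).toNat
  left_inv n := by
    show (bk - (bk - (n : ℤ))).toNat = n
    omega
  right_inv k := by
    rcases k with ⟨k, hk⟩
    simp only [Subtype.mk.injEq]
    omega

theorem stmt8 (d : ℕ) (hd : 1 ≤ d) (j : Fin d) (ℓ : ℕ) (hℓ : 1 ≤ ℓ)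
    (βe L : ℝ) (hβe : 0 < βe) (hL : 0 < L)
    (s : ℝ≥0∞) (hs : 1 ≤ s)
    (f : (Fin d → ℝ) → ℝ) (hf : Measurable f)
    (hfs : ∀ u : ℝ,
      eLpNorm (diffIter j u ℓ f) s volume ≤ ENNReal.ofReal (L * |u| ^ βe))
    (K : ℝ → ℝ) (hK : Measurable K)
    (I : ℝ) (hI : I = ∫ z, |K z| * |z| ^ βe)
    (hint : Integrable (fun z => |K z| * |z| ^ βe)) :
    ∀ bk : ℤ,
      (∑' k : {k : ℤ // k ≤ bk},
          eLpNorm (fun x => ∫ z, K z * diffIter j (z * Real.exp (k : ℤ)) ℓ f x)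
            s volume)
        ≤ ENNReal.ofReal (L * I * Real.exp ((bk : ℝ) * βe) / (1 - Real.exp (-βe))) := by
  intro bk
  have hI0 : 0 ≤ I := by
    rw [hI]
    exact integral_nonneg fun z => by positivity
  have hterm : ∀ k : {k : ℤ // k ≤ bk},
      eLpNorm (fun x => ∫ z, K z * diffIter j (z * Real.exp ((k : ℤ) : ℝ)) ℓ f x) s volume
        ≤ ENNReal.ofReal (L * I * Real.exp (((k : ℤ) : ℝ) * βe)) := by
    intro k
    have h1 := aux_key j ℓ hβe hL hs hf hfs hK hI hint (Real.exp_pos (((k : ℤ) : ℝ)))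
    rwa [← Real.exp_mul] at h1
  calc (∑' k : {k : ℤ // k ≤ bk},
          eLpNorm (fun x => ∫ z, K z * diffIter j (z * Real.exp ((k : ℤ) : ℝ)) ℓ f x) s volume)
      ≤ ∑' k : {k : ℤ // k ≤ bk}, ENNReal.ofReal (L * I * Real.exp (((k : ℤ) : ℝ) * βe)) :=
        ENNReal.tsum_le_tsum hterm
    _ = ∑' n : ℕ, ENNReal.ofReal (L * I * Real.exp (((bk - n : ℤ) : ℝ) * βe)) :=
        (Equiv.tsum_eq (auxEquiv bk)
          (fun k : {k : ℤ // k ≤ bk} => ENNReal.ofReal (L * I * Real.exp (((k : ℤ) : ℝ) * βe)))).symm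
    _ = ∑' n : ℕ, ENNReal.ofReal (L * I * Real.exp ((bk : ℝ) * βe)) *
          ENNReal.ofReal (Real.exp (-βe)) ^ n := by
        apply tsum_congr
        intro n
        rw [← ENNReal.ofReal_pow (Real.exp_nonneg _), ← ENNReal.ofReal_mul (by positivity)]
        congr 1
        rw [show ((bk - n : ℤ) : ℝ) * βe = (bk : ℝ) * βe + (n : ℕ) * (-βe) from by
              push_cast; ring,
          Real.exp_add, Real.exp_nat_mul]
        ring
    _ = ENNReal.ofReal (L * I * Real.exp ((bk : ℝ) * βe)) *
          (1 - ENNReal.ofReal (Real.exp (-βe)))⁻¹ := by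
        rw [ENNReal.tsum_mul_left, ENNReal.tsum_geometric]
    _ = ENNReal.ofReal (L * I * Real.exp ((bk : ℝ) * βe) / (1 - Real.exp (-βe))) := by
        have hpos : (0:ℝ) < 1 - Real.exp (-βe) := by
          have h2 : Real.exp (-βe) < 1 := Real.exp_lt_one_iff.2 (by linarith)
          linarith
        rw [ENNReal.ofReal_div_of_pos hpos, div_eq_mul_inv]
        congr 1
        rw [ENNReal.ofReal_sub 1 (Real.exp_nonneg _), ENNReal.ofReal_one]
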